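/- arXiv:2602.14076 — 9 statements merged into one kernel-verified Lean document; each statement's English description precedes it below -/
import Mathlib

section
/- Fix γ ∈ [0,1] and ξ ≥ 0, and consider the MCV mechanism M^γ under deterministic verification. Then: (i) for every t ∈ [0,1], the expected grade of a truthful agent of type t equals max(t, γ); (ii) for every t, t̂ ∈ [0,1] with t̂ ≠ t, the expected grade of a type-t agent reporting t̂ equals γ. Consequently truth-telling is a weakly dominant strategy (HR1), truth-tellers are never punished (HR2), and all realized grades are at least −ξ (HR3), i.e., M^γ is valid. -/
/-- Audit probability of the MCV mechanism `M^γ` with penalty bound `ξ`. -/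
noncomputable def mcvV (γ ξ r : ℝ) : ℝ := if γ < r then (r - γ) / (r + ξ) else 0

/-- Grade of an unverified agent in the MCV mechanism. -/
noncomputable def mcvBot (γ r : ℝ) : ℝ := if γ < r then r else γ

/-- Grade of a verified agent (report `r`, verified type `s`) in the MCV mechanism. -/
noncomputable def mcvVer (ξ r s : ℝ) : ℝ := if s = r then r else -ξ

/-- Expected grade of a type-`t` agent reporting `r` under deterministic verification. -/
noncomputable def mcvBar (γ ξ t r : ℝ) : ℝ :=
  mcvV γ ξ r * mcvVer ξ r t + (1 - mcvV γ ξ r) * mcvBot γ r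

lemma mcvBar_truth (γ ξ : ℝ) (hγ0 : 0 ≤ γ) (hξ : 0 ≤ ξ) (t : ℝ)
    (ht : t ∈ Set.Icc (0 : ℝ) 1) : mcvBar γ ξ t t = max t γ := by
  unfold mcvBar mcvV mcvBot mcvVer
  by_cases h : γ < t
  · have hpos : 0 < t + ξ := by linarith [hγ0.trans_lt h]
    simp only [if_pos h, if_pos rfl, if_true]
    rw [max_eq_left h.le]
    field_simp
    ring
  · simp only [if_neg h, if_pos rfl, if_true]
    rw [max_eq_right (not_lt.1 h)]; ring

lemma mcvBar_lie (γ ξ : ℝ) (hγ0 : 0 ≤ γ) (hξ : 0 ≤ ξ) (t r : ℝ)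
    (hr : r ∈ Set.Icc (0 : ℝ) 1) (hne : r ≠ t) : mcvBar γ ξ t r = γ := by
  unfold mcvBar mcvV mcvBot mcvVer
  have hne' : t ≠ r := fun h => hne h.symm
  by_cases h : γ < r
  · have hpos : 0 < r + ξ := by linarith [hγ0.trans_lt h]
    simp only [if_pos h, if_neg hne']
    field_simp
    ring
  · simp only [if_neg h, if_neg hne']
    ring

theorem mcv_valid (γ ξ : ℝ) (hγ : γ ∈ Set.Icc (0 : ℝ) 1) (hξ : 0 ≤ ξ) :
    -- (i) truthful expected grade
    (∀ t ∈ Set.Icc (0 : ℝ) 1, mcvBar γ ξ t t = max t γ) ∧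
    -- (ii) expected grade of any lie equals γ
    (∀ t ∈ Set.Icc (0 : ℝ) 1, ∀ r ∈ Set.Icc (0 : ℝ) 1, r ≠ t → mcvBar γ ξ t r = γ) ∧
    -- HR1: truth-telling is weakly dominant
    (∀ t ∈ Set.Icc (0 : ℝ) 1, ∀ r ∈ Set.Icc (0 : ℝ) 1, mcvBar γ ξ t r ≤ mcvBar γ ξ t t) ∧
    -- HR2: truth-tellers are never punished
    (∀ t ∈ Set.Icc (0 : ℝ) 1, t ≤ mcvBot γ t ∧ t ≤ mcvVer ξ t t) ∧
    -- HR3: all realized grades are at least -ξ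
    (∀ r ∈ Set.Icc (0 : ℝ) 1, -ξ ≤ mcvBot γ r ∧ ∀ s ∈ Set.Icc (0 : ℝ) 1, -ξ ≤ mcvVer ξ r s) := by
  obtain ⟨hγ0, hγ1⟩ := hγ
  refine ⟨fun t ht => mcvBar_truth γ ξ hγ0 hξ t ht,
    fun t ht r hr hne => mcvBar_lie γ ξ hγ0 hξ t r hr hne, ?_, ?_, ?_⟩
  · intro t ht r hr
    rw [mcvBar_truth γ ξ hγ0 hξ t ht]
    by_cases h : r = t
    · rw [h, mcvBar_truth γ ξ hγ0 hξ t ht]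
    · rw [mcvBar_lie γ ξ hγ0 hξ t r hr h]; exact le_max_right _ _
  · intro t ht
    constructor
    · unfold mcvBot; split <;> [exact le_refl t; linarith [not_lt.1 (by assumption : ¬ γ < t)]]
    · unfold mcvVer; simp
  · intro r hr
    constructor
    · unfold mcvBot; split <;> linarith [hr.1]
    · intro s hs; unfold mcvVer; split <;> linarith [hr.1]
end

section
/- (Optimality of the MCV class.) Let ξ ≥ 0 and let (V, g⊥, gver) be any mechanism satisfying HR1, HR2 and HR3. Then there exists γ ∈ [0,1] such that: (i) for every t ∈ [0,1], the truthful expected grade satisfies ḡ_t(t) ≥ max(t, γ); and (ii) for every t̂ ∈ [0,1], V(t̂)·(t̂ + ξ) ≥ t̂ − γ. Consequently, for every Borel probability measure p on [0,1], the expected bias ∫(ḡ_t(t) − t) dp(t) is at least ∫ max(γ − t, 0) dp(t), and the expected verification ∫ V(t) dp(t) is at least ∫ max(t − γ, 0)/(t + ξ) dp(t) (interpreting the integrand as 0 when t ≤ γ); i.e., the mechanism is weakly dominated by the MCV mechanism M^γ. -/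
open MeasureTheory

/-- Optimality of the MCV class: any valid mechanism is weakly dominated by some
MCV mechanism `M^γ`, both pointwise (truthful grades and audit probabilities) and
in expectation over any type distribution `p` on `[0,1]`. -/
theorem mcv_class_optimal (ξ : ℝ) (hξ : 0 ≤ ξ)
    (V gbot : ℝ → ℝ) (gver : ℝ → ℝ → ℝ)
    (hV : ∀ r ∈ Set.Icc (0 : ℝ) 1, V r ∈ Set.Icc (0 : ℝ) 1)
    (gbar : ℝ → ℝ → ℝ)
    (hgbar : ∀ t r, gbar t r = V r * gver r t + (1 - V r) * gbot r)
    (HR1 : ∀ t ∈ Set.Icc (0 : ℝ) 1, ∀ r ∈ Set.Icc (0 : ℝ) 1, gbar t r ≤ gbar t t)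
    (HR2 : ∀ t ∈ Set.Icc (0 : ℝ) 1, t ≤ gbot t ∧ t ≤ gver t t)
    (HR3 : ∀ r ∈ Set.Icc (0 : ℝ) 1, -ξ ≤ gbot r ∧ ∀ s ∈ Set.Icc (0 : ℝ) 1, -ξ ≤ gver r s) :
    ∃ γ ∈ Set.Icc (0 : ℝ) 1,
      -- (i) truthful expected grades are at least those of M^γ
      (∀ t ∈ Set.Icc (0 : ℝ) 1, max t γ ≤ gbar t t) ∧
      -- (ii) audit probabilities are at least those of M^γ
      (∀ r ∈ Set.Icc (0 : ℝ) 1, r - γ ≤ V r * (r + ξ)) ∧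
      -- consequently, for any type distribution p on [0,1]:
      (∀ p : Measure ℝ, IsProbabilityMeasure p → p (Set.Icc (0 : ℝ) 1) = 1 →
        (Integrable (fun t => gbar t t) p →
          ∫ t, max (γ - t) 0 ∂p ≤ ∫ t, (gbar t t - t) ∂p) ∧
        (Integrable V p →
          ∫ t, max (t - γ) 0 / (t + ξ) ∂p ≤ ∫ t, V t ∂p)) := by
  classical
  set f : ℝ → ℝ := fun r => r - V r * (r + ξ) with hf
  set S : Set ℝ := insert 0 (f '' Set.Icc 0 1) with hS
  have hne : S.Nonempty := ⟨0, Or.inl rfl⟩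
  have hub : ∀ x ∈ S, x ≤ 1 := by
    rintro x (rfl | ⟨r, hr, rfl⟩)
    · norm_num
    · have h1 : 0 ≤ V r := (hV r hr).1
      have h2 : 0 ≤ V r * (r + ξ) := mul_nonneg h1 (by linarith [hr.1])
      simp only [hf]
      linarith [hr.2]
  have hbdd : BddAbove S := ⟨1, hub⟩
  set γ := sSup S with hγ
  have hγ0 : 0 ≤ γ := le_csSup hbdd (Or.inl rfl)
  have hγ1 : γ ≤ 1 := csSup_le hne hub
  have keyi : ∀ t ∈ Set.Icc (0:ℝ) 1, max t γ ≤ gbar t t := by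
    intro t ht
    have hVt := hV t ht
    have h2 := HR2 t ht
    have htt : t ≤ gbar t t := by
      rw [hgbar]
      nlinarith [hVt.1, hVt.2, h2.1, h2.2]
    have hγt : γ ≤ gbar t t := by
      apply csSup_le hne
      rintro x (rfl | ⟨r, hr, rfl⟩)
      · linarith [ht.1]
      · have hdev := HR1 t ht r hr
        have hVr := hV r hr
        have hgv := (HR3 r hr).2 t ht
        have hgb := (HR2 r hr).1
        rw [hgbar t r] at hdev
        have hp1 : V r * (-ξ) ≤ V r * gver r t :=
          mul_le_mul_of_nonneg_left hgv hVr.1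
        have hp2 : (1 - V r) * r ≤ (1 - V r) * gbot r :=
          mul_le_mul_of_nonneg_left hgb (by linarith [hVr.2])
        simp only [hf]
        nlinarith
    exact max_le htt hγt
  have keyii : ∀ r ∈ Set.Icc (0:ℝ) 1, r - γ ≤ V r * (r + ξ) := by
    intro r hr
    have : f r ≤ γ := le_csSup hbdd (Or.inr ⟨r, hr, rfl⟩)
    simp only [hf] at this
    linarith
  refine ⟨γ, ⟨hγ0, hγ1⟩, keyi, keyii, ?_⟩
  intro p hp hp1
  have hae : ∀ᵐ t ∂p, t ∈ Set.Icc (0:ℝ) 1 := by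
    have hc : p (Set.Icc (0:ℝ) 1)ᶜ = 0 := by
      rw [measure_compl measurableSet_Icc (measure_ne_top p _), hp1, measure_univ]
      simp
    rw [ae_iff]
    simpa [Set.compl_def] using hc
  constructor
  · intro hint
    have hf1 : Integrable (fun t => max (γ - t) 0) p := by
      apply Integrable.mono' (integrable_const (1:ℝ))
      · exact ((continuous_const.sub continuous_id).max continuous_const).aestronglyMeasurable
      · filter_upwards [hae] with t ht
        rw [Real.norm_eq_abs, abs_of_nonneg (le_max_right _ _)]
        exact max_le (by linarith [ht.1]) (by norm_num)
    have hg1 : Integrable (fun t => gbar t t - t) p := by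
      apply hint.sub
      apply Integrable.mono' (integrable_const (1:ℝ))
      · exact measurable_id.aestronglyMeasurable
      · filter_upwards [hae] with t ht
        rw [Real.norm_eq_abs, abs_of_nonneg ht.1]
        exact ht.2
    apply integral_mono_ae hf1 hg1
    filter_upwards [hae] with t ht
    have hk := keyi t ht
    have h1 : γ - t ≤ gbar t t - t := by
      have := le_trans (le_max_right t γ) hk
      linarith
    have h2 : (0:ℝ) ≤ gbar t t - t := by
      have := le_trans (le_max_left t γ) hk
      linarith
    exact max_le h1 h2
  · intro hint
    have hf2 : Integrable (fun t => max (t - γ) 0 / (t + ξ)) p := by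
      apply Integrable.mono' (integrable_const (1:ℝ))
      · exact (((measurable_id.sub measurable_const).max measurable_const).div
          (measurable_id.add measurable_const)).aestronglyMeasurable
      · filter_upwards [hae] with t ht
        rw [Real.norm_eq_abs]
        rcases le_or_gt t γ with h | h
        · rw [max_eq_right (by linarith), zero_div]
          norm_num
        · have ht0 : 0 < t + ξ := by linarith
          rw [abs_of_nonneg (div_nonneg (le_max_right _ _) ht0.le),
            div_le_one ht0]
          exact max_le (by linarith) ht0.le
    apply integral_mono_ae hf2 hint
    filter_upwards [hae] with t ht
    rcases le_or_gt t γ with h | h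
    · rw [max_eq_right (by linarith), zero_div]
      exact (hV t ht).1
    · have ht0 : 0 < t + ξ := by linarith
      rw [max_eq_left (by linarith), div_le_iff₀ ht0]
      exact keyii t ht
end

section
/- Let ξ ≥ 0 and let (V, g⊥, gver) be a mechanism satisfying HR1, HR2 and HR3. Define g'ver(t̂, s) := gver(t̂, s) if s = t̂ and g'ver(t̂, s) := −ξ if s ≠ t̂. Then the mechanism (V, g⊥, g'ver) also satisfies HR1, HR2 and HR3, and it has the same truthful expected grades: for every t ∈ [0,1], V(t)·g'ver(t, t) + (1 − V(t))·g⊥(t) = V(t)·gver(t, t) + (1 − V(t))·g⊥(t). -/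
/-- Replacing the verified grade of a caught liar by the maximal penalty `-ξ` preserves
validity (HR1, HR2, HR3) and leaves all truthful expected grades unchanged. -/
theorem max_penalty_preserves_validity (ξ : ℝ) (hξ : 0 ≤ ξ)
    (V gbot : ℝ → ℝ) (gver : ℝ → ℝ → ℝ)
    (hV : ∀ r ∈ Set.Icc (0 : ℝ) 1, V r ∈ Set.Icc (0 : ℝ) 1)
    (HR1 : ∀ t ∈ Set.Icc (0 : ℝ) 1, ∀ r ∈ Set.Icc (0 : ℝ) 1,
      V r * gver r t + (1 - V r) * gbot r ≤ V t * gver t t + (1 - V t) * gbot t)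
    (HR2 : ∀ t ∈ Set.Icc (0 : ℝ) 1, t ≤ gbot t ∧ t ≤ gver t t)
    (HR3 : ∀ r ∈ Set.Icc (0 : ℝ) 1, -ξ ≤ gbot r ∧ ∀ s ∈ Set.Icc (0 : ℝ) 1, -ξ ≤ gver r s) :
    ∀ gver' : ℝ → ℝ → ℝ,
      (∀ r s, gver' r s = if s = r then gver r s else -ξ) →
      -- HR1 for the modified mechanism
      (∀ t ∈ Set.Icc (0 : ℝ) 1, ∀ r ∈ Set.Icc (0 : ℝ) 1,
        V r * gver' r t + (1 - V r) * gbot r ≤ V t * gver' t t + (1 - V t) * gbot t) ∧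
      -- HR2 for the modified mechanism
      (∀ t ∈ Set.Icc (0 : ℝ) 1, t ≤ gbot t ∧ t ≤ gver' t t) ∧
      -- HR3 for the modified mechanism
      (∀ r ∈ Set.Icc (0 : ℝ) 1, -ξ ≤ gbot r ∧ ∀ s ∈ Set.Icc (0 : ℝ) 1, -ξ ≤ gver' r s) ∧
      -- same truthful expected grades
      (∀ t ∈ Set.Icc (0 : ℝ) 1,
        V t * gver' t t + (1 - V t) * gbot t = V t * gver t t + (1 - V t) * gbot t) := by
  intro gver' hdef
  have hdiag : ∀ t, gver' t t = gver t t := fun t => by simp [hdef]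
  refine ⟨?_, ?_, ?_, ?_⟩
  · intro t ht r hr
    rw [hdiag]
    rcases eq_or_ne t r with h | h
    · subst h; rw [hdiag]
    · rw [hdef, if_neg h]
      calc V r * (-ξ) + (1 - V r) * gbot r
          ≤ V r * gver r t + (1 - V r) * gbot r := by
            have := ((HR3 r hr).2 t ht)
            nlinarith [(hV r hr).1]
        _ ≤ _ := HR1 t ht r hr
  · intro t ht
    exact ⟨(HR2 t ht).1, (hdiag t) ▸ (HR2 t ht).2⟩
  · intro r hr
    refine ⟨(HR3 r hr).1, fun s hs => ?_⟩
    rw [hdef]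
    split
    · exact (HR3 r hr).2 s (by simpa using hs)
    · exact le_refl _
  · intro t ht; rw [hdiag]
end

section
/- (Limited liability forces near-full verification.) Let ξ = 0 (limited liability) and let (V, g⊥, gver) be a mechanism satisfying HR1, HR2 and HR3 with ξ = 0. If the truthful expected grade of a type-0 agent is 0, i.e., V(0)·gver(0,0) + (1 − V(0))·g⊥(0) = 0, then V(t̂) = 1 for every t̂ ∈ (0,1]. Consequently, for any Borel probability measure p on [0,1] with p({0}) > 0, if the expected bias ∫(ḡ_t(t) − t) dp(t) equals 0, then the expected verification ∫ V(t) dp(t) is at least 1 − p({0}). -/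
open MeasureTheory

/-- Limited liability (`ξ = 0`) forces near-full verification: if a valid mechanism
gives a truthful type-0 agent an expected grade of `0`, it must audit every positive
report with probability 1; hence zero expected bias forces expected verification at
least `1 - p({0})` whenever `p({0}) > 0`. -/
theorem limited_liability_full_verification
    (V gbot : ℝ → ℝ) (gver : ℝ → ℝ → ℝ)
    (hV : ∀ r ∈ Set.Icc (0 : ℝ) 1, V r ∈ Set.Icc (0 : ℝ) 1)
    (gbar : ℝ → ℝ → ℝ)
    (hgbar : ∀ t r, gbar t r = V r * gver r t + (1 - V r) * gbot r)
    (HR1 : ∀ t ∈ Set.Icc (0 : ℝ) 1, ∀ r ∈ Set.Icc (0 : ℝ) 1, gbar t r ≤ gbar t t)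
    (HR2 : ∀ t ∈ Set.Icc (0 : ℝ) 1, t ≤ gbot t ∧ t ≤ gver t t)
    (HR3 : ∀ r ∈ Set.Icc (0 : ℝ) 1, (0 : ℝ) ≤ gbot r ∧ ∀ s ∈ Set.Icc (0 : ℝ) 1, (0 : ℝ) ≤ gver r s) :
    (gbar 0 0 = 0 → ∀ r ∈ Set.Ioc (0 : ℝ) 1, V r = 1) ∧
    (∀ p : Measure ℝ, IsProbabilityMeasure p → p (Set.Icc (0 : ℝ) 1) = 1 →
      0 < p {(0 : ℝ)} →
      Integrable (fun t => gbar t t) p → Integrable V p →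
      (∫ t, (gbar t t - t) ∂p) = 0 →
      1 - (p {(0 : ℝ)}).toReal ≤ ∫ t, V t ∂p) := by
  have h01 : (0 : ℝ) ∈ Set.Icc (0 : ℝ) 1 := ⟨le_refl 0, by norm_num⟩
  have key : gbar 0 0 = 0 → ∀ r ∈ Set.Ioc (0 : ℝ) 1, V r = 1 := by
    intro h0 r hr
    have hr' : r ∈ Set.Icc (0 : ℝ) 1 := ⟨hr.1.le, hr.2⟩
    have h1 : gbar 0 r ≤ 0 := by
      have := HR1 0 h01 r hr'
      rw [h0] at this
      exact this
    have hVr := hV r hr'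
    have hg : (0 : ℝ) ≤ gver r 0 := (HR3 r hr').2 0 h01
    have hb : r ≤ gbot r := (HR2 r hr').1
    rw [hgbar] at h1
    nlinarith [hVr.1, hVr.2, hr.1]
  refine ⟨key, ?_⟩
  intro p hp hI h0pos hint hintV hzero
  have hIccnull : p (Set.Icc (0 : ℝ) 1)ᶜ = 0 := by
    have := measure_compl (measurableSet_Icc : MeasurableSet (Set.Icc (0:ℝ) 1))
      (measure_ne_top p _)
    rw [hI, measure_univ] at this
    simp [this]
  have hIcc : ∀ᵐ t ∂p, t ∈ Set.Icc (0 : ℝ) 1 := by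
    rw [ae_iff]
    exact hIccnull
  -- nonnegativity of the bias
  have hnonneg : ∀ᵐ t ∂p, 0 ≤ gbar t t - t := by
    filter_upwards [hIcc] with t ht
    have hVt := hV t ht
    have h2 := HR2 t ht
    rw [hgbar]
    nlinarith [hVt.1, hVt.2, h2.1, h2.2]
  have hid : Integrable (fun t : ℝ => t) p := by
    refine Integrable.mono' (integrable_const 1) measurable_id.aestronglyMeasurable ?_
    filter_upwards [hIcc] with t ht
    rw [Real.norm_eq_abs, abs_le]
    exact ⟨le_trans (by norm_num) ht.1, ht.2⟩
  have hintf : Integrable (fun t => gbar t t - t) p := hint.sub hid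
  have haez : (fun t => gbar t t - t) =ᵐ[p] 0 :=
    (integral_eq_zero_iff_of_nonneg_ae hnonneg hintf).mp hzero
  -- from p{0}>0, get gbar 0 0 = 0
  have h00 : gbar 0 0 = 0 := by
    by_contra hne
    have hsub : {(0 : ℝ)} ⊆ {t | ¬ (fun t => gbar t t - t) t = (0 : ℝ → ℝ) t} := by
      intro x hx
      rcases hx with rfl
      simpa using hne
    have : p {(0 : ℝ)} = 0 := le_antisymm (le_trans (measure_mono hsub) (le_of_eq haez)) zero_le
    exact absurd this h0pos.ne'
  have hV1 := key h00
  -- V ≥ indicator of Ioc 0 1 a.e.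
  have hmono : ∀ᵐ t ∂p, Set.indicator (Set.Ioc (0:ℝ) 1) (fun _ => (1:ℝ)) t ≤ V t := by
    filter_upwards [hIcc] with t ht
    by_cases h : t ∈ Set.Ioc (0:ℝ) 1
    · rw [Set.indicator_of_mem h, hV1 t h]
    · rw [Set.indicator_of_notMem h]
      exact (hV t ht).1
  have hindint : Integrable (Set.indicator (Set.Ioc (0:ℝ) 1) (fun _ => (1:ℝ))) p :=
    (integrable_const 1).indicator measurableSet_Ioc
  have hle : ∫ t, Set.indicator (Set.Ioc (0:ℝ) 1) (fun _ => (1:ℝ)) t ∂p ≤ ∫ t, V t ∂p :=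
    integral_mono_ae hindint hintV hmono
  have hind : ∫ t, Set.indicator (Set.Ioc (0:ℝ) 1) (fun _ => (1:ℝ)) t ∂p
      = (p (Set.Ioc (0:ℝ) 1)).toReal := by
    rw [integral_indicator_const _ measurableSet_Ioc]
    simp [smul_eq_mul, measureReal_def]
  -- measure arithmetic
  have hsplit : p {(0:ℝ)} + p (Set.Ioc (0:ℝ) 1) = 1 := by
    rw [← measure_union (by simp [Set.disjoint_left]) measurableSet_Ioc]
    rw [show ({(0:ℝ)} : Set ℝ) ∪ Set.Ioc 0 1 = Set.Icc 0 1 by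
      rw [Set.singleton_union, Set.Ioc_insert_left (by norm_num : (0:ℝ) ≤ 1)]]
    exact hI
  have h0fin : p {(0:ℝ)} ≠ ⊤ := measure_ne_top p _
  have hIocfin : p (Set.Ioc (0:ℝ) 1) ≠ ⊤ := measure_ne_top p _
  have htr : (p {(0:ℝ)}).toReal + (p (Set.Ioc (0:ℝ) 1)).toReal = 1 := by
    rw [← ENNReal.toReal_add h0fin hIocfin, hsplit]
    simp
  linarith [hle, hind.symm ▸ hle]
end

section
/- (AS-MCV bias bound.) Let n ≥ 2, β ∈ [0,1], and let t_1, …, t_n ∈ [0,1]. For each i define the leave-one-out cutoff γ_i := sup{γ ∈ [0,1] : (1/(n−1))·Σ_{j ≠ i} max(γ − t_j, 0) ≤ (n/(n−1))·β}. Then the average bias of the Agent-Specific MCV mechanism satisfies (1/n)·Σ_{i=1}^n (max(t_i, γ_i) − t_i) ≤ β + 1/n. -/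
/-- AS-MCV bias bound: with leave-one-out cutoffs `γ i`, the average bias of the
Agent-Specific MCV mechanism is at most `β + 1/n`. -/
theorem as_mcv_bias_bound (n : ℕ) (hn : 2 ≤ n) (β : ℝ) (hβ : β ∈ Set.Icc (0 : ℝ) 1)
    (t : Fin n → ℝ) (ht : ∀ i, t i ∈ Set.Icc (0 : ℝ) 1)
    (γ : Fin n → ℝ)
    (hγ : ∀ i, γ i = sSup {g ∈ Set.Icc (0 : ℝ) 1 |
      (1 / ((n : ℝ) - 1)) * ∑ j ∈ Finset.univ.erase i, max (g - t j) 0 ≤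
        ((n : ℝ) / ((n : ℝ) - 1)) * β}) :
    (1 / (n : ℝ)) * ∑ i, (max (t i) (γ i) - t i) ≤ β + 1 / (n : ℝ) := by
  have hn2 : (2:ℝ) ≤ (n:ℝ) := by exact_mod_cast hn
  have hpos : (0:ℝ) < (n:ℝ) - 1 := by linarith
  have hnpos : (0:ℝ) < (n:ℝ) := by linarith
  set f : ℝ → ℝ := fun g => ∑ j, max (g - t j) 0 with hf
  have hfc : Continuous f := by
    apply continuous_finset_sum
    intro j _
    exact (continuous_id.sub continuous_const).max continuous_const
  set c : ℝ := (n:ℝ) * β + 1 with hc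
  set B : Set ℝ := {g ∈ Set.Icc (0:ℝ) 1 | f g ≤ c} with hB
  have hBcomp : IsCompact B := by
    have hBeq : B = Set.Icc (0:ℝ) 1 ∩ {g | f g ≤ c} := rfl
    rw [hBeq]
    exact isCompact_Icc.inter_right (isClosed_le hfc continuous_const)
  have hB0 : (0:ℝ) ∈ B := by
    refine ⟨⟨le_refl 0, zero_le_one⟩, ?_⟩
    have hz : f 0 = 0 := by
      simp only [hf]
      apply Finset.sum_eq_zero
      intro j _
      have := (ht j).1
      simp only [zero_sub]
      exact max_eq_right (by linarith)
    rw [hz, hc]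
    nlinarith [hβ.1]
  -- each γ i is in B
  have hγB : ∀ i, γ i ∈ B := by
    intro i
    set A : Set ℝ := {g ∈ Set.Icc (0:ℝ) 1 |
      (1 / ((n : ℝ) - 1)) * ∑ j ∈ Finset.univ.erase i, max (g - t j) 0 ≤
        ((n : ℝ) / ((n : ℝ) - 1)) * β} with hA
    have hAcomp : IsCompact A := by
      have hAeq : A = Set.Icc (0:ℝ) 1 ∩ {g |
        (1 / ((n : ℝ) - 1)) * ∑ j ∈ Finset.univ.erase i, max (g - t j) 0 ≤
          ((n : ℝ) / ((n : ℝ) - 1)) * β} := rfl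
      rw [hAeq]
      refine isCompact_Icc.inter_right (isClosed_le ?_ continuous_const)
      exact continuous_const.mul (continuous_finset_sum _ (fun j _ =>
        (continuous_id.sub continuous_const).max continuous_const))
    have hA0 : (0:ℝ) ∈ A := by
      refine ⟨⟨le_refl 0, zero_le_one⟩, ?_⟩
      have hz : ∑ j ∈ Finset.univ.erase i, max ((0:ℝ) - t j) 0 = 0 := by
        apply Finset.sum_eq_zero
        intro j _
        have := (ht j).1
        simp only [zero_sub]
        exact max_eq_right (by linarith)
      rw [hz, mul_zero]
      have h1 : 0 ≤ (n:ℝ) / ((n:ℝ) - 1) := le_of_lt (div_pos hnpos hpos)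
      exact mul_nonneg h1 hβ.1
    have hmem : γ i ∈ A := by
      rw [hγ i]
      exact hAcomp.sSup_mem ⟨0, hA0⟩
    obtain ⟨hIcc, hineq⟩ := hmem
    refine ⟨hIcc, ?_⟩
    set S : ℝ := ∑ j ∈ Finset.univ.erase i, max (γ i - t j) 0 with hS
    have hSle : S ≤ (n:ℝ) * β := by
      have h2 := mul_le_mul_of_nonneg_left hineq (le_of_lt hpos)
      calc S = ((n:ℝ)-1) * ((1/((n:ℝ)-1)) * S) := by field_simp
        _ ≤ ((n:ℝ)-1) * (((n:ℝ)/((n:ℝ)-1)) * β) := h2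
        _ = (n:ℝ) * β := by field_simp
    have hsplit : f (γ i) = max (γ i - t i) 0 + S := by
      rw [hf, hS]
      exact (Finset.add_sum_erase Finset.univ _ (Finset.mem_univ i)).symm
    have hmax1 : max (γ i - t i) 0 ≤ 1 := by
      have h1 := hIcc.2
      have h2 := (ht i).1
      exact max_le (by linarith) zero_le_one
    rw [hsplit, hc]
    linarith
  set G : ℝ := sSup B with hG
  have hGB : G ∈ B := hBcomp.sSup_mem ⟨0, hB0⟩
  have hγle : ∀ i, γ i ≤ G := fun i => le_csSup hBcomp.bddAbove (hγB i)
  have hsum : ∑ i, (max (t i) (γ i) - t i) ≤ c := by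
    calc ∑ i, (max (t i) (γ i) - t i) = ∑ i, max (γ i - t i) 0 := by
          apply Finset.sum_congr rfl
          intro i _
          rcases le_total (t i) (γ i) with h | h
          · rw [max_eq_right h, max_eq_left (by linarith)]
          · rw [max_eq_left h, max_eq_right (by linarith)]
            linarith
      _ ≤ ∑ i, max (G - t i) 0 := by
          apply Finset.sum_le_sum
          intro i _
          exact max_le_max (by linarith [hγle i]) le_rfl
      _ = f G := rfl
      _ ≤ c := hGB.2
  have h1n : (0:ℝ) ≤ 1 / (n:ℝ) := le_of_lt (by positivity)
  have := mul_le_mul_of_nonneg_left hsum h1n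
  calc (1 / (n : ℝ)) * ∑ i, (max (t i) (γ i) - t i) ≤ (1 / (n:ℝ)) * c := this
    _ = β + 1 / (n:ℝ) := by rw [hc]; field_simp
end

section
/- (AS-MCV verification bound.) Let n ≥ 2, β ∈ [0,1], ξ ≥ 0, and let t_1, …, t_n ∈ [0,1]. For each i define the leave-one-out cutoff γ_i := sup{γ ∈ [0,1] : (1/(n−1))·Σ_{j ≠ i} max(γ − t_j, 0) ≤ (n/(n−1))·β}, and define the full-sample cutoff γ* := sup{γ ∈ [0,1] : (1/n)·Σ_{j=1}^n max(γ − t_j, 0) ≤ β}. Then γ_i ≥ γ* for every i, and consequently the average verification of the Agent-Specific MCV mechanism satisfies (1/n)·Σ_{i=1}^n max(t_i − γ_i, 0)/(t_i + ξ) ≤ (1/n)·Σ_{i=1}^n max(t_i − γ*, 0)/(t_i + ξ) (interpreting each summand as 0 when the numerator is 0). -/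
/-- AS-MCV verification bound: each leave-one-out cutoff `γ i` is at least the
full-sample cutoff `γ*`, hence the average verification of the Agent-Specific MCV
mechanism is at most that of the MCV mechanism with cutoff `γ*`. -/
theorem as_mcv_verification_bound (n : ℕ) (hn : 2 ≤ n)
    (β : ℝ) (hβ : β ∈ Set.Icc (0 : ℝ) 1) (ξ : ℝ) (hξ : 0 ≤ ξ)
    (t : Fin n → ℝ) (ht : ∀ i, t i ∈ Set.Icc (0 : ℝ) 1)
    (γ : Fin n → ℝ)
    (hγ : ∀ i, γ i = sSup {g ∈ Set.Icc (0 : ℝ) 1 |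
      (1 / ((n : ℝ) - 1)) * ∑ j ∈ Finset.univ.erase i, max (g - t j) 0 ≤
        ((n : ℝ) / ((n : ℝ) - 1)) * β})
    (γstar : ℝ)
    (hγstar : γstar = sSup {g ∈ Set.Icc (0 : ℝ) 1 |
      (1 / (n : ℝ)) * ∑ j, max (g - t j) 0 ≤ β}) :
    (∀ i, γstar ≤ γ i) ∧
    (1 / (n : ℝ)) * ∑ i, max (t i - γ i) 0 / (t i + ξ) ≤
      (1 / (n : ℝ)) * ∑ i, max (t i - γstar) 0 / (t i + ξ) := by
  have hn2 : (2 : ℝ) ≤ (n : ℝ) := by exact_mod_cast hn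
  have hnpos : (0 : ℝ) < n := by linarith
  have hn1pos : (0 : ℝ) < (n : ℝ) - 1 := by linarith
  have key : ∀ i, γstar ≤ γ i := by
    intro i
    rw [hγ i, hγstar]
    apply csSup_le_csSup
    · -- bounded above by 1
      exact ⟨1, fun g hg => hg.1.2⟩
    · -- nonempty: 0 belongs
      refine ⟨0, ⟨le_refl 0, zero_le_one⟩, ?_⟩
      have : ∀ j, max ((0:ℝ) - t j) 0 = 0 := fun j => by
        have := (ht j).1; simp [max_eq_right]; linarith
      simp only [this, Finset.sum_const_zero, mul_zero]
      exact hβ.1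
    · -- subset
      rintro g ⟨hg01, hg⟩
      refine ⟨hg01, ?_⟩
      have hsum : ∑ j, max (g - t j) 0 ≤ (n : ℝ) * β := by
        rw [div_mul_eq_mul_div, one_mul, div_le_iff₀ hnpos] at hg
        linarith
      have hsub : ∑ j ∈ Finset.univ.erase i, max (g - t j) 0 ≤
          ∑ j, max (g - t j) 0 :=
        Finset.sum_le_sum_of_subset_of_nonneg (Finset.erase_subset _ _)
          (fun j _ _ => le_max_right _ _)
      rw [div_mul_eq_mul_div, one_mul, div_mul_eq_mul_div,
        div_le_div_iff₀ hn1pos hn1pos]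
      nlinarith [le_trans hsub hsum]
  refine ⟨key, ?_⟩
  apply mul_le_mul_of_nonneg_left _ (by positivity)
  apply Finset.sum_le_sum
  intro i _
  rcases eq_or_lt_of_le (by have := (ht i).1; linarith : (0:ℝ) ≤ t i + ξ) with h | h
  · rw [← h]; simp
  · exact (div_le_div_iff_of_pos_right h).mpr (max_le_max (by linarith [key i]) le_rfl)
end

section
/- (Expected grade of the Polynomial Verification mechanism.) Let κ ≥ 1 be an integer, θ ∈ (0,1], and t, t̂ ∈ [0,1]. Set c := κ^κ/(κ+1)^(κ+1) and q := θ·t̂^(1/κ). Then q·(c + (1/θ)·(1 + 1/κ)·t − 1/(κ·θ^(κ+1))) + (1 − q)·(c + (1/(κ·θ^(κ+1)))·Σ_{ℓ=1}^{κ} q^ℓ) = c + (1 + 1/κ)·t·t̂^(1/κ) − (1/κ)·t̂^(1+1/κ), i.e., the expected grade of a type-t agent reporting t̂ equals c + R^(1+1/κ)(t̂, t). -/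
/-- Expected grade of the Polynomial Verification mechanism: with audit probability
`q = θ · r^(1/κ)`, verified grade `c + (1/θ)(1 + 1/κ)·t − 1/(κ·θ^(κ+1))` (in expectation
over the performance, whose mean is `t`), and unverified grade
`c + (1/(κ·θ^(κ+1))) · Σ_{ℓ=1}^κ q^ℓ`, the expected grade of a type-`t` agent reporting `r`
equals `c + (1 + 1/κ)·t·r^(1/κ) − (1/κ)·r^(1+1/κ) = c + R^(1+1/κ)(r, t)`. -/
theorem pv_expected_grade (κ : ℕ) (hκ : 1 ≤ κ) (θ : ℝ) (hθ : θ ∈ Set.Ioc (0 : ℝ) 1)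
    (t r : ℝ) (ht : t ∈ Set.Icc (0 : ℝ) 1) (hr : r ∈ Set.Icc (0 : ℝ) 1)
    (c q : ℝ) (hc : c = (κ : ℝ) ^ κ / ((κ : ℝ) + 1) ^ (κ + 1))
    (hq : q = θ * r ^ ((1 : ℝ) / κ)) :
    q * (c + (1 / θ) * (1 + 1 / (κ : ℝ)) * t - 1 / ((κ : ℝ) * θ ^ (κ + 1))) +
      (1 - q) * (c + (1 / ((κ : ℝ) * θ ^ (κ + 1))) * ∑ ℓ ∈ Finset.Icc 1 κ, q ^ ℓ) =
    c + (1 + 1 / (κ : ℝ)) * t * r ^ ((1 : ℝ) / κ) -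
      (1 / (κ : ℝ)) * r ^ (1 + (1 : ℝ) / κ) := by
  have hκ0 : (κ : ℝ) ≠ 0 := by positivity
  have hθ0 : θ ≠ 0 := ne_of_gt hθ.1
  have hsum : ∀ n : ℕ, (1 - q) * ∑ ℓ ∈ Finset.Icc 1 n, q ^ ℓ = q - q ^ (n + 1) := by
    intro n
    induction n with
    | zero => simp
    | succ m ih =>
      rw [Finset.sum_Icc_succ_top (by omega), mul_add, ih]
      ring
  have hrq : q ^ (κ + 1) = θ ^ (κ + 1) * r ^ (1 + (1 : ℝ) / κ) := by
    have h1 : (r ^ ((1 : ℝ) / κ)) ^ (κ + 1) = r ^ (1 + (1 : ℝ) / κ) := by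
      rw [← Real.rpow_natCast (r ^ ((1 : ℝ) / κ)) (κ + 1), ← Real.rpow_mul hr.1]
      congr 1
      push_cast
      field_simp
    rw [hq, mul_pow, h1]
  have hθκ : (κ : ℝ) * θ ^ (κ + 1) ≠ 0 := by positivity
  calc q * (c + (1 / θ) * (1 + 1 / (κ : ℝ)) * t - 1 / ((κ : ℝ) * θ ^ (κ + 1))) +
      (1 - q) * (c + (1 / ((κ : ℝ) * θ ^ (κ + 1))) * ∑ ℓ ∈ Finset.Icc 1 κ, q ^ ℓ)
      = q * (c + (1 / θ) * (1 + 1 / (κ : ℝ)) * t - 1 / ((κ : ℝ) * θ ^ (κ + 1))) +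
        ((1 - q) * c + (1 / ((κ : ℝ) * θ ^ (κ + 1))) *
          ((1 - q) * ∑ ℓ ∈ Finset.Icc 1 κ, q ^ ℓ)) := by ring
    _ = q * (c + (1 / θ) * (1 + 1 / (κ : ℝ)) * t - 1 / ((κ : ℝ) * θ ^ (κ + 1))) +
        ((1 - q) * c + (1 / ((κ : ℝ) * θ ^ (κ + 1))) *
          (q - θ ^ (κ + 1) * r ^ (1 + (1 : ℝ) / κ))) := by rw [hsum κ, hrq]
    _ = c + (1 + 1 / (κ : ℝ)) * t * r ^ ((1 : ℝ) / κ) -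
      (1 / (κ : ℝ)) * r ^ (1 + (1 : ℝ) / κ) := by
        rw [hq]
        field_simp
        ring
end

section
/- (PV satisfies truthfulness and nonnegative bias.) Let κ ≥ 1 be an integer, t ∈ [0,1], and c_κ := κ^κ/(κ+1)^(κ+1). Then the function φ(t̂) := c_κ + (1 + 1/κ)·t·t̂^(1/κ) − (1/κ)·t̂^(1+1/κ) on [0,1] attains its maximum exactly at t̂ = t, and the truthful value satisfies φ(t) = c_κ + t^(1+1/κ) ≥ t. Hence the bias φ(t) − t of a truthful type-t agent lies in [0, 1/κ]. -/
lemma pv_gap_nonneg (n : ℕ) (u v : ℝ) (hu : 0 ≤ u) (hv : 0 ≤ v) :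
    ((n : ℝ) + 1) * u * v ^ n ≤ u ^ (n + 1) + (n : ℝ) * v ^ (n + 1) := by
  induction n with
  | zero => simp
  | succ m ih =>
    have hsq : 0 ≤ (u - v) * (u ^ (m + 1) - v ^ (m + 1)) := by
      rcases le_total u v with h | h
      · have := pow_le_pow_left₀ hu h (m + 1)
        nlinarith
      · have := pow_le_pow_left₀ hv h (m + 1)
        nlinarith
    have hv' : 0 ≤ v * (u ^ (m + 1) + (m : ℝ) * v ^ (m + 1) - ((m : ℝ) + 1) * u * v ^ m) :=
      mul_nonneg hv (by linarith)
    have key : u ^ (m + 1 + 1) + ((m : ℝ) + 1) * v ^ (m + 1 + 1)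
        - ((m : ℝ) + 1 + 1) * u * v ^ (m + 1)
        = v * (u ^ (m + 1) + (m : ℝ) * v ^ (m + 1) - ((m : ℝ) + 1) * u * v ^ m)
          + (u - v) * (u ^ (m + 1) - v ^ (m + 1)) := by ring
    push_cast
    linarith [key, hv', hsq]

lemma pv_gap_pos (n : ℕ) (hn : 1 ≤ n) (u v : ℝ) (hu : 0 ≤ u) (hv : 0 ≤ v) (huv : u ≠ v) :
    ((n : ℝ) + 1) * u * v ^ n < u ^ (n + 1) + (n : ℝ) * v ^ (n + 1) := by
  obtain ⟨m, rfl⟩ : ∃ m, n = m + 1 := ⟨n - 1, by omega⟩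
  have hsq : 0 < (u - v) * (u ^ (m + 1) - v ^ (m + 1)) := by
    rcases lt_or_gt_of_ne huv with h | h
    · have := pow_lt_pow_left₀ h hu (by omega : m + 1 ≠ 0)
      nlinarith
    · have := pow_lt_pow_left₀ h hv (by omega : m + 1 ≠ 0)
      nlinarith
  have ih := pv_gap_nonneg m u v hu hv
  have hv' : 0 ≤ v * (u ^ (m + 1) + (m : ℝ) * v ^ (m + 1) - ((m : ℝ) + 1) * u * v ^ m) :=
    mul_nonneg hv (by linarith)
  have key : u ^ (m + 1 + 1) + ((m : ℝ) + 1) * v ^ (m + 1 + 1)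
      - ((m : ℝ) + 1 + 1) * u * v ^ (m + 1)
      = v * (u ^ (m + 1) + (m : ℝ) * v ^ (m + 1) - ((m : ℝ) + 1) * u * v ^ m)
        + (u - v) * (u ^ (m + 1) - v ^ (m + 1)) := by ring
  push_cast
  linarith [key, hv', hsq]

/-- Expected grade in the PV mechanism of a type-`t` agent reporting `r`:
`φ(r) = c_κ + (1 + 1/κ)·t·r^(1/κ) − (1/κ)·r^(1+1/κ)`. -/
noncomputable def pvPhi (κ : ℕ) (t r : ℝ) : ℝ :=
  (κ : ℝ) ^ κ / ((κ : ℝ) + 1) ^ (κ + 1) +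
    (1 + 1 / (κ : ℝ)) * t * r ^ ((1 : ℝ) / κ) - (1 / (κ : ℝ)) * r ^ (1 + (1 : ℝ) / κ)

/-- PV satisfies truthfulness and nonnegative bias: `φ` attains its maximum on `[0,1]`
exactly at the truthful report `r = t`, the truthful value is `c_κ + t^(1+1/κ) ≥ t`,
and the truthful bias lies in `[0, 1/κ]`. -/
theorem pv_truthful_nonneg_bias (κ : ℕ) (hκ : 1 ≤ κ) (t : ℝ) (ht : t ∈ Set.Icc (0 : ℝ) 1) :
    (∀ r ∈ Set.Icc (0 : ℝ) 1, pvPhi κ t r ≤ pvPhi κ t t) ∧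
    (∀ r ∈ Set.Icc (0 : ℝ) 1, r ≠ t → pvPhi κ t r < pvPhi κ t t) ∧
    pvPhi κ t t = (κ : ℝ) ^ κ / ((κ : ℝ) + 1) ^ (κ + 1) + t ^ (1 + (1 : ℝ) / κ) ∧
    t ≤ pvPhi κ t t ∧
    (0 ≤ pvPhi κ t t - t ∧ pvPhi κ t t - t ≤ 1 / (κ : ℝ)) := by
  have hK : (0 : ℝ) < (κ : ℝ) := by exact_mod_cast hκ
  have hne : (1 : ℝ) + 1 / (κ : ℝ) ≠ 0 := by positivity
  -- rpow ↔ pow bridge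
  have pow_inv : ∀ r : ℝ, 0 ≤ r → (r ^ ((1 : ℝ) / κ)) ^ κ = r := by
    intro r hr
    rw [← Real.rpow_natCast (r ^ ((1 : ℝ) / κ)) κ, ← Real.rpow_mul hr, one_div,
      inv_mul_cancel₀ hK.ne', Real.rpow_one]
  have pow_inv1 : ∀ r : ℝ, 0 ≤ r → (r ^ ((1 : ℝ) / κ)) ^ (κ + 1) = r ^ (1 + (1 : ℝ) / κ) := by
    intro r hr
    rw [pow_succ, pow_inv r hr, Real.rpow_add' hr hne, Real.rpow_one]
  have hv0 : 0 ≤ t ^ ((1 : ℝ) / κ) := Real.rpow_nonneg ht.1 _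
  have hvt : (t ^ ((1 : ℝ) / κ)) ^ κ = t := pow_inv t ht.1
  have hvt1 : (t ^ ((1 : ℝ) / κ)) ^ (κ + 1) = t ^ (1 + (1 : ℝ) / κ) := pow_inv1 t ht.1
  -- difference formula
  have hphi : ∀ r : ℝ, 0 ≤ r → pvPhi κ t t - pvPhi κ t r =
      (1 / (κ : ℝ)) * ((r ^ ((1 : ℝ) / κ)) ^ (κ + 1)
        + (κ : ℝ) * (t ^ ((1 : ℝ) / κ)) ^ (κ + 1)
        - ((κ : ℝ) + 1) * (r ^ ((1 : ℝ) / κ)) * (t ^ ((1 : ℝ) / κ)) ^ κ) := by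
    intro r hr
    have hut1 : (r ^ ((1 : ℝ) / κ)) ^ (κ + 1) = r ^ (1 + (1 : ℝ) / κ) := pow_inv1 r hr
    have e3 : (1 + 1 / (κ : ℝ)) * t * (t ^ ((1 : ℝ) / κ))
        = (1 + 1 / (κ : ℝ)) * (t ^ ((1 : ℝ) / κ)) ^ κ * (t ^ ((1 : ℝ) / κ)) := by rw [hvt]
    have e4 : (1 + 1 / (κ : ℝ)) * t * (r ^ ((1 : ℝ) / κ))
        = (1 + 1 / (κ : ℝ)) * (t ^ ((1 : ℝ) / κ)) ^ κ * (r ^ ((1 : ℝ) / κ)) := by rw [hvt]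
    simp only [pvPhi]
    rw [← hvt1, ← hut1, e3, e4]
    field_simp
    ring
  -- truthful value
  have heq : pvPhi κ t t = (κ : ℝ) ^ κ / ((κ : ℝ) + 1) ^ (κ + 1) + t ^ (1 + (1 : ℝ) / κ) := by
    simp only [pvPhi]
    rw [Real.rpow_add' ht.1 hne, Real.rpow_one]
    field_simp
    ring
  -- t ≤ φ(t)
  have hmain : t ≤ pvPhi κ t t := by
    have g := pv_gap_nonneg κ ((κ : ℝ) / ((κ : ℝ) + 1)) (t ^ ((1 : ℝ) / κ)) (by positivity) hv0
    have e1 : ((κ : ℝ) + 1) * ((κ : ℝ) / ((κ : ℝ) + 1)) = (κ : ℝ) := by field_simp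
    have e2 : ((κ : ℝ) / ((κ : ℝ) + 1)) ^ (κ + 1)
        = (κ : ℝ) * ((κ : ℝ) ^ κ / ((κ : ℝ) + 1) ^ (κ + 1)) := by
      rw [div_pow, pow_succ]
      ring
    rw [e1, e2] at g
    have h2 : (κ : ℝ) * (t ^ ((1 : ℝ) / κ)) ^ κ
        ≤ (κ : ℝ) * ((κ : ℝ) ^ κ / ((κ : ℝ) + 1) ^ (κ + 1) + (t ^ ((1 : ℝ) / κ)) ^ (κ + 1)) := by
      rw [mul_add]
      linarith
    have h3 := le_of_mul_le_mul_left h2 hK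
    rw [heq, ← hvt1]
    calc t = (t ^ ((1 : ℝ) / κ)) ^ κ := hvt.symm
    _ ≤ _ := h3
  refine ⟨?_, ?_, heq, hmain, by linarith, ?_⟩
  · intro r hr
    have hu0 : 0 ≤ r ^ ((1 : ℝ) / κ) := Real.rpow_nonneg hr.1 _
    have g := pv_gap_nonneg κ (r ^ ((1 : ℝ) / κ)) (t ^ ((1 : ℝ) / κ)) hu0 hv0
    have := hphi r hr.1
    nlinarith [mul_nonneg (le_of_lt (by positivity : (0:ℝ) < 1 / (κ:ℝ)))
      (by linarith : (0:ℝ) ≤ (r ^ ((1 : ℝ) / κ)) ^ (κ + 1)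
        + (κ : ℝ) * (t ^ ((1 : ℝ) / κ)) ^ (κ + 1)
        - ((κ : ℝ) + 1) * (r ^ ((1 : ℝ) / κ)) * (t ^ ((1 : ℝ) / κ)) ^ κ)]
  · intro r hr hrt
    have hu0 : 0 ≤ r ^ ((1 : ℝ) / κ) := Real.rpow_nonneg hr.1 _
    have huv : r ^ ((1 : ℝ) / κ) ≠ t ^ ((1 : ℝ) / κ) := by
      intro h
      exact hrt (by rw [← pow_inv r hr.1, ← pow_inv t ht.1, h])
    have g := pv_gap_pos κ hκ (r ^ ((1 : ℝ) / κ)) (t ^ ((1 : ℝ) / κ)) hu0 hv0 huv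
    have := hphi r hr.1
    nlinarith [mul_pos (by positivity : (0:ℝ) < 1 / (κ:ℝ))
      (by linarith : (0:ℝ) < (r ^ ((1 : ℝ) / κ)) ^ (κ + 1)
        + (κ : ℝ) * (t ^ ((1 : ℝ) / κ)) ^ (κ + 1)
        - ((κ : ℝ) + 1) * (r ^ ((1 : ℝ) / κ)) * (t ^ ((1 : ℝ) / κ)) ^ κ)]
  · have hle1 : t ^ (1 + (1 : ℝ) / κ) ≤ t := by
      calc t ^ (1 + (1 : ℝ) / κ) = t * t ^ ((1 : ℝ) / κ) := by
            rw [Real.rpow_add' ht.1 hne, Real.rpow_one]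
      _ ≤ t * 1 := mul_le_mul_of_nonneg_left
            (Real.rpow_le_one ht.1 ht.2 (by positivity)) ht.1
      _ = t := mul_one t
    have hc : (κ : ℝ) ^ κ / ((κ : ℝ) + 1) ^ (κ + 1) ≤ 1 / (κ : ℝ) := by
      rw [div_le_div_iff₀ (by positivity) hK]
      calc (κ : ℝ) ^ κ * (κ : ℝ) = (κ : ℝ) ^ (κ + 1) := (pow_succ _ _).symm
      _ ≤ ((κ : ℝ) + 1) ^ (κ + 1) := pow_le_pow_left₀ hK.le (by linarith) _
      _ = 1 * ((κ : ℝ) + 1) ^ (κ + 1) := (one_mul _).symm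
    rw [heq]
    linarith
end

section
/- (Histogram pigeonhole.) Let T be a nonempty finite set of reals, n a positive integer, and t, t̂ : {1, …, n} → T with t̂_i ≥ t_i for all i and t̂_j > t_j for some j. Then the set S := {s ∈ T : |{i : t̂_i = s}| > |{i : t_i = s}|} is nonempty, and for t_V := max S there exists an agent i with t̂_i = t_V and t_i < t̂_i. That is, in any profile in which all lies are upward and at least one agent lies, some lying agent reports the maximal type whose reported count exceeds its true count (and is thus verified with certainty by the Histogram mechanism). -/
open Finset

/-- Histogram pigeonhole: if all lies are upward (`t̂ i ≥ t i`) and someone lies, then the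
set `S` of types whose reported count exceeds their true count is nonempty, and some agent
reporting the maximal element of `S` is a liar (hence verified with certainty by the
Histogram mechanism). -/
theorem histogram_pigeonhole (T : Finset ℝ) (hT : T.Nonempty) (n : ℕ) (hn : 0 < n)
    (t thad : Fin n → ℝ)
    (htT : ∀ i, t i ∈ T) (hthadT : ∀ i, thad i ∈ T)
    (hup : ∀ i, t i ≤ thad i) (hlie : ∃ j, t j < thad j) :
    ∃ hS : (T.filter (fun s =>
        (Finset.univ.filter (fun i => thad i = s)).card >
          (Finset.univ.filter (fun i => t i = s)).card)).Nonempty,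
      ∃ i : Fin n,
        thad i = (T.filter (fun s =>
          (Finset.univ.filter (fun i => thad i = s)).card >
            (Finset.univ.filter (fun i => t i = s)).card)).max' hS ∧
        t i < thad i := by
  set S := T.filter (fun s =>
      (Finset.univ.filter (fun i => thad i = s)).card >
        (Finset.univ.filter (fun i => t i = s)).card) with hSdef
  -- Nonemptiness of S
  have hS : S.Nonempty := by
    by_contra h
    rw [Finset.not_nonempty_iff_eq_empty, Finset.filter_eq_empty_iff] at h
    -- so for all s ∈ T, reported count ≤ true count
    have hle : ∀ s ∈ T, (Finset.univ.filter (fun i => thad i = s)).card ≤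
        (Finset.univ.filter (fun i => t i = s)).card := by
      intro s hs
      have := h hs
      omega
    -- total counts are both n
    have h1 : ∑ s ∈ T, (Finset.univ.filter (fun i => t i = s)).card =
        (Finset.univ : Finset (Fin n)).card :=
      (Finset.card_eq_sum_card_fiberwise (fun i _ => htT i)).symm
    have h2 : ∑ s ∈ T, (Finset.univ.filter (fun i => thad i = s)).card =
        (Finset.univ : Finset (Fin n)).card :=
      (Finset.card_eq_sum_card_fiberwise (fun i _ => hthadT i)).symm
    have heq : ∀ s ∈ T, (Finset.univ.filter (fun i => thad i = s)).card =
        (Finset.univ.filter (fun i => t i = s)).card :=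
      (Finset.sum_eq_sum_iff_of_le hle).mp (h2.trans h1.symm)
    -- compare total sums of values
    have hsum : ∀ f : Fin n → ℝ, (∀ i, f i ∈ T) →
        ∑ i, f i = ∑ s ∈ T, ((Finset.univ.filter (fun i => f i = s)).card : ℝ) * s := by
      intro f hf
      rw [← Finset.sum_fiberwise_of_maps_to (fun i _ => hf i) f]
      refine Finset.sum_congr rfl fun s _ => ?_
      rw [Finset.sum_congr rfl (fun i hi => (Finset.mem_filter.mp hi).2),
        Finset.sum_const, nsmul_eq_mul]
    have hlt : ∑ i, t i < ∑ i, thad i :=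
      Finset.sum_lt_sum (fun i _ => hup i) (hlie.imp fun j hj => ⟨Finset.mem_univ j, hj⟩)
    rw [hsum t htT, hsum thad hthadT] at hlt
    have : ∑ s ∈ T, ((Finset.univ.filter (fun i => thad i = s)).card : ℝ) * s =
        ∑ s ∈ T, ((Finset.univ.filter (fun i => t i = s)).card : ℝ) * s :=
      Finset.sum_congr rfl fun s hs => by rw [heq s hs]
    linarith
  refine ⟨hS, ?_⟩
  set M := S.max' hS with hM
  have hMS : M ∈ S := S.max'_mem hS
  have hcard : (Finset.univ.filter (fun i => t i = M)).card <
      (Finset.univ.filter (fun i => thad i = M)).card := (Finset.mem_filter.mp hMS).2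
  -- some agent reports M but has true type ≠ M
  have : ∃ i, thad i = M ∧ t i ≠ M := by
    by_contra h
    push_neg at h
    have hsub : (Finset.univ.filter (fun i => thad i = M)) ⊆
        (Finset.univ.filter (fun i => t i = M)) := by
      intro i hi
      simp only [Finset.mem_filter, Finset.mem_univ, true_and] at hi ⊢
      exact h i hi
    exact absurd (Finset.card_le_card hsub) (by omega)
  obtain ⟨i, hi1, hi2⟩ := this
  exact ⟨i, hi1, lt_of_le_of_ne (hup i) (fun he => hi2 (he.symm ▸ hi1))⟩
end
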